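/- In the first-order tangent algebra A = K[X]⧸((X - C s)(X - C t)), the groupoid law u ⋆ w := u - algebraMap K A (α(u)) + w (defined when α(u) = β(w)) is multiplicative with respect to the ring product: for all u, w, u', w' ∈ A with α(u) = β(w) and α(u') = β(w'), one has (u ⋆ w) * (u' ⋆ w') = (u * u') ⋆ (w * w') (note α(u * u') = β(w * w'), so the right-hand side is defined). -/

import Mathlib

open Polynomial

/-- The defining ideal of the first-order tangent algebra `K_{(t,s)}`. -/
noncomputable abbrev tIdeal (K : Type*) [CommRing K] (t s : K) : Ideal (Polynomial K) :=
  Ideal.span {(X - C s) * (X - C t)}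

/-- The first-order tangent algebra `K_{(t,s)} = K[X] ⧸ ((X - C s) * (X - C t))`. -/
abbrev TangentAlgebra₁ (K : Type*) [CommRing K] (t s : K) :=
  Polynomial K ⧸ tIdeal K t s

/-- The groupoid law `u ⋆ w = u - algebraMap K A (α u) + w` on the first-order tangent
algebra is multiplicative with respect to the ring product:
`(u ⋆ w) * (u' ⋆ w') = (u * u') ⋆ (w * w')` whenever `α u = β w` and `α u' = β w'`. -/
theorem groupoid_law_multiplicative (K : Type*) [CommRing K] (t s : K)
    (α β : TangentAlgebra₁ K t s →ₐ[K] K)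
    (hα : ∀ P : Polynomial K, α (Ideal.Quotient.mk (tIdeal K t s) P) = P.eval s)
    (hβ : ∀ P : Polynomial K, β (Ideal.Quotient.mk (tIdeal K t s) P) = P.eval t)
    (star : TangentAlgebra₁ K t s → TangentAlgebra₁ K t s → TangentAlgebra₁ K t s)
    (hstar : ∀ u w, star u w = u - algebraMap K (TangentAlgebra₁ K t s) (α u) + w) :
    ∀ u w u' w' : TangentAlgebra₁ K t s, α u = β w → α u' = β w' →
      star u w * star u' w' = star (u * u') (w * w') := by
  have key : ∀ x y : TangentAlgebra₁ K t s, α x = 0 → β y = 0 → x * y = 0 := by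
    intro x y hx hy
    obtain ⟨P, rfl⟩ := Ideal.Quotient.mk_surjective x
    obtain ⟨Q, rfl⟩ := Ideal.Quotient.mk_surjective y
    rw [hα] at hx
    rw [hβ] at hy
    rw [← map_mul, Ideal.Quotient.eq_zero_iff_mem, Ideal.mem_span_singleton]
    exact mul_dvd_mul ((dvd_iff_isRoot).2 hx) ((dvd_iff_isRoot).2 hy)
  intro u w u' w' h h'
  set c := algebraMap K (TangentAlgebra₁ K t s)
  have h1 : (u - c (α u)) * (w' - c (α u')) = 0 := by
    apply key
    · simp [c]
    · rw [map_sub, h']; simp [c]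
  have h2 : (u' - c (α u')) * (w - c (α u)) = 0 := by
    apply key
    · simp [c]
    · rw [map_sub, h]; simp [c]
  rw [hstar, hstar, hstar, map_mul, map_mul]
  linear_combination h1 + h2
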